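/- Fix an integer K ≥ 2 and reals ρ > 0, μ_t > 0. For each μ_i > 0 set λ̃ = ρ·μ_i, α_i = λ̃ + i·μ_i + (K−i)·μ_t/K for 0 ≤ i ≤ K, and γ_i = i·μ_i + (K−i)·μ_t/K. Define recursively: m_K = 1/γ_K; m_{K−1} = (1 + m_K·λ̃)/γ_{K−1}; n_{K−1} = (K−1)·μ_i/γ_{K−1}; and for i = 2, ..., K−1 (decreasing index K−i): m_{K−i} = (1 + m_{K−i+1}·λ̃)/(α_{K−i} − n_{K−i+1}·λ̃) and n_{K−i} = (K−i)·μ_i/(α_{K−i} − n_{K−i+1}·λ̃). Then, as μ_i → ∞ (with ρ fixed), the first moment of the effective server time, E[Υ̌_0] = (1 + m_1·λ̃)/(λ̃ + μ_t − n_1·λ̃), converges to ǎ_0/(η·μ_t), where ǎ_0 = Σ_{j=0}^{K} ρ^j/j! and η = Σ_{j=0}^{K−1} (ρ^j/j!)·(K−j)/K. -/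

import Mathlib

open Filter

/-- `α_i = λ̃ + i·μᵢ + (K−i)·μ_t/K` with `λ̃ = ρ·μᵢ`. -/
noncomputable def alphaCD (K : ℕ) (ρ μt μi : ℝ) (i : ℕ) : ℝ :=
  ρ * μi + (i : ℝ) * μi + ((K : ℝ) - (i : ℝ)) * μt / K

/-- `γ_i = i·μᵢ + (K−i)·μ_t/K`. -/
noncomputable def gammaCD (K : ℕ) (μt μi : ℝ) (i : ℕ) : ℝ :=
  (i : ℝ) * μi + ((K : ℝ) - (i : ℝ)) * μt / K

/-- Limit of `m_j · λ̃` as `μᵢ → ∞`. -/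
noncomputable def WFaux (K : ℕ) (ρ : ℝ) (j : ℕ) : ℝ :=
  (Nat.factorial (j - 1) : ℝ) / ρ ^ (j - 1) *
    ∑ l ∈ Finset.Ico j (K + 1), ρ ^ l / (Nat.factorial l : ℝ)

/-- Limit of `λ̃ · (1 − n_j)` as `μᵢ → ∞`. -/
noncomputable def VFaux (K : ℕ) (ρ μt : ℝ) (j : ℕ) : ℝ :=
  (Nat.factorial (j - 1) : ℝ) / ρ ^ (j - 1) *
    ∑ l ∈ Finset.Ico j K, ρ ^ l / (Nat.factorial l : ℝ) * (((K : ℝ) - l) * μt / K)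

lemma WFaux_top (K : ℕ) (ρ : ℝ) (j : ℕ) (h : K + 1 ≤ j) : WFaux K ρ j = 0 := by
  rw [WFaux, Finset.Ico_eq_empty (by omega), Finset.sum_empty, mul_zero]

lemma VFaux_top (K : ℕ) (ρ μt : ℝ) (j : ℕ) (h : K ≤ j) : VFaux K ρ μt j = 0 := by
  rw [VFaux, Finset.Ico_eq_empty (by omega), Finset.sum_empty, mul_zero]

lemma WFaux_succ (K : ℕ) {ρ : ℝ} (hρ : ρ ≠ 0) (s : ℕ) (h : s + 1 ≤ K) :
    WFaux K ρ (s + 1) = ρ / ((s : ℝ) + 1) * (1 + WFaux K ρ (s + 2)) := by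
  rw [WFaux, WFaux]
  rw [Finset.sum_eq_sum_Ico_succ_bot (by omega : s + 1 < K + 1)]
  simp only [Nat.add_sub_cancel, show s + 2 - 1 = s + 1 from rfl]
  have h1 : ((s + 1).factorial : ℝ) = ((s : ℝ) + 1) * (s.factorial : ℝ) := by
    push_cast [Nat.factorial_succ]; ring
  have h2 : (s.factorial : ℝ) ≠ 0 := Nat.cast_ne_zero.2 (Nat.factorial_ne_zero s)
  have h4 : ρ ^ s ≠ 0 := pow_ne_zero _ hρ
  have h5 : ((s : ℝ) + 1) ≠ 0 := by positivity
  rw [h1, pow_succ]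
  field_simp

lemma VFaux_succ (K : ℕ) {ρ μt : ℝ} (hρ : ρ ≠ 0) (hK : (K : ℝ) ≠ 0) (s : ℕ)
    (h : s + 1 ≤ K) :
    VFaux K ρ μt (s + 1)
      = ρ / ((s : ℝ) + 1) * (((K : ℝ) - ((s : ℝ) + 1)) * μt / K + VFaux K ρ μt (s + 2)) := by
  rcases eq_or_lt_of_le h with heq | hlt
  · rw [VFaux_top K ρ μt (s + 1) (by omega), VFaux_top K ρ μt (s + 2) (by omega)]
    have : (K : ℝ) = (s : ℝ) + 1 := by exact_mod_cast heq.symm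
    rw [this]; ring
  · rw [VFaux, VFaux]
    rw [Finset.sum_eq_sum_Ico_succ_bot hlt]
    simp only [Nat.add_sub_cancel, show s + 2 - 1 = s + 1 from rfl]
    have h1 : ((s + 1).factorial : ℝ) = ((s : ℝ) + 1) * (s.factorial : ℝ) := by
      push_cast [Nat.factorial_succ]; ring
    have h2 : (s.factorial : ℝ) ≠ 0 := Nat.cast_ne_zero.2 (Nat.factorial_ne_zero s)
    have h4 : ρ ^ s ≠ 0 := pow_ne_zero _ hρ
    have h5 : ((s : ℝ) + 1) ≠ 0 := by positivity
    rw [h1, pow_succ]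
    push_cast
    field_simp

lemma tendsto_mul_div_linear {f g : ℝ → ℝ} {a b : ℝ} (hb : b ≠ 0)
    (hf : Tendsto f atTop (nhds a))
    (hg : Tendsto (fun x => g x / x) atTop (nhds b)) :
    Tendsto (fun x => f x * x / g x) atTop (nhds (a / b)) := by
  have h := hf.div hg hb
  exact h.congr fun x => div_div_eq_mul_div (f x) (g x) x

lemma tendsto_div_linear {g v : ℝ → ℝ} {j c V : ℝ} (hv : Tendsto v atTop (nhds V))
    (hg : ∀ x, g x = j * x + (c + v x)) :
    Tendsto (fun x => g x / x) atTop (nhds j) := by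
  have h2 : Tendsto (fun x => j + (c + v x) * x⁻¹) atTop (nhds (j + (c + V) * 0)) :=
    tendsto_const_nhds.add ((tendsto_const_nhds.add hv).mul tendsto_inv_atTop_zero)
  rw [mul_zero, add_zero] at h2
  refine h2.congr' ?_
  filter_upwards [eventually_ne_atTop (0 : ℝ)] with x hx
  rw [hg x]
  field_simp

lemma aux_id (ρ x c b D : ℝ) (hD : D ≠ 0) (h : D = b * x + c) :
    ρ * c * x / D = ρ * x * (1 - b * x / D) := by
  subst h
  rw [one_sub_div hD]
  ring

/-- In the SFJ limit `μᵢ → ∞` (with `ρ` fixed), the first moment of the CD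
effective server time, `E[Υ̌₀] = (1 + m₁λ̃)/(λ̃ + μ_t − n₁λ̃)`, converges to
`ǎ₀/(η·μ_t)`. -/
theorem cd_est_first_moment_limit
    (K : ℕ) (hK : 2 ≤ K) (ρ μt : ℝ) (hρ : 0 < ρ) (hmut : 0 < μt)
    (m n : ℝ → ℕ → ℝ)
    (hmK : ∀ μi : ℝ, 0 < μi → m μi K = 1 / gammaCD K μt μi K)
    (hmK1 : ∀ μi : ℝ, 0 < μi →
      m μi (K - 1) = (1 + m μi K * (ρ * μi)) / gammaCD K μt μi (K - 1))
    (hnK1 : ∀ μi : ℝ, 0 < μi →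
      n μi (K - 1) = ((K : ℝ) - 1) * μi / gammaCD K μt μi (K - 1))
    (hrec : ∀ μi : ℝ, 0 < μi → ∀ i, 2 ≤ i → i ≤ K - 1 →
      m μi (K - i) = (1 + m μi (K - i + 1) * (ρ * μi))
          / (alphaCD K ρ μt μi (K - i) - n μi (K - i + 1) * (ρ * μi))
      ∧ n μi (K - i) = ((K : ℝ) - (i : ℝ)) * μi
          / (alphaCD K ρ μt μi (K - i) - n μi (K - i + 1) * (ρ * μi))) :
    Tendsto (fun μi => (1 + m μi 1 * (ρ * μi)) / (ρ * μi + μt - n μi 1 * (ρ * μi)))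
      atTop
      (nhds ((∑ j ∈ Finset.range (K + 1), ρ ^ j / (Nat.factorial j : ℝ))
        / ((∑ j ∈ Finset.range K, (ρ ^ j / (Nat.factorial j : ℝ)) * (((K : ℝ) - j) / K))
            * μt))) := by
  have h2K : (2 : ℝ) ≤ (K : ℝ) := by exact_mod_cast hK
  have hKR : (0 : ℝ) < (K : ℝ) := by linarith
  have hK0 : (K : ℝ) ≠ 0 := ne_of_gt hKR
  have hρ0 : ρ ≠ 0 := ne_of_gt hρ
  have ecast : ((K - 1 : ℕ) : ℝ) = (K : ℝ) - 1 := by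
    have := Nat.cast_sub (R := ℝ) (by omega : 1 ≤ K); push_cast at this; exact this
  have hKm1 : ((K : ℝ) - 1) ≠ 0 := by intro h; nlinarith
  -- limit of m at index K
  have hmKlim : Tendsto (fun x => m x K * (ρ * x)) atTop (nhds (ρ / K)) := by
    refine Tendsto.congr' ?_ (tendsto_const_nhds (x := ρ / (K : ℝ)))
    filter_upwards [eventually_gt_atTop (0 : ℝ)] with x hx
    rw [hmK x hx, gammaCD, sub_self, zero_mul, zero_div, add_zero]
    field_simp
  have key : ∀ i : ℕ, 1 ≤ i → i ≤ K - 1 →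
      Tendsto (fun x => m x (K - i) * (ρ * x)) atTop (nhds (WFaux K ρ (K - i))) ∧
      Tendsto (fun x => ρ * x * (1 - n x (K - i))) atTop (nhds (VFaux K ρ μt (K - i))) := by
    intro i hi1
    induction i, hi1 using Nat.le_induction with
    | base =>
      intro _
      have e1 : K - 1 + 1 = K := by omega
      have hγ : ∀ x : ℝ, gammaCD K μt x (K - 1)
          = ((K : ℝ) - 1) * x + (μt / K + (fun _ : ℝ => (0 : ℝ)) x) := by
        intro x; rw [gammaCD, ecast]; ring
      have hgdiv : Tendsto (fun x => gammaCD K μt x (K - 1) / x) atTop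
          (nhds ((K : ℝ) - 1)) :=
        tendsto_div_linear (V := 0) tendsto_const_nhds hγ
      have hγpos : ∀ x : ℝ, 0 < x → 0 < gammaCD K μt x (K - 1) := by
        intro x hx
        rw [hγ x]
        have : 0 < μt / K := by positivity
        nlinarith
      constructor
      · -- m part
        have hf : Tendsto (fun x => (1 + m x K * (ρ * x)) * ρ) atTop
            (nhds ((1 + ρ / K) * ρ)) :=
          (tendsto_const_nhds.add hmKlim).mul tendsto_const_nhds
        have hml := tendsto_mul_div_linear hKm1 hf hgdiv
        have hval : WFaux K ρ (K - 1) = (1 + ρ / K) * ρ / ((K : ℝ) - 1) := by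
          have e2 : K - 2 + 1 = K - 1 := by omega
          have e3 : K - 2 + 2 = K := by omega
          have e4 : K - 1 + 2 = K + 1 := by omega
          have ec2 : ((K - 2 : ℕ) : ℝ) = (K : ℝ) - 2 := by
            have := Nat.cast_sub (R := ℝ) (by omega : 2 ≤ K); push_cast at this; exact this
          have hstep := WFaux_succ K hρ0 (K - 2) (by omega)
          rw [e2, e3, ec2] at hstep
          have hWK := WFaux_succ K hρ0 (K - 1) (by omega)
          rw [e1, e4, ecast, WFaux_top K ρ (K + 1) le_rfl] at hWK
          rw [hstep, hWK]
          have : (K : ℝ) - 1 + 1 = (K : ℝ) := by ring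
          rw [this]
          have : (K : ℝ) - 2 + 1 = (K : ℝ) - 1 := by ring
          rw [this]
          ring
        rw [hval]
        refine hml.congr' ?_
        filter_upwards [eventually_gt_atTop (0 : ℝ)] with x hx
        rw [hmK1 x hx]
        ring
      · -- n part
        have hnl := tendsto_mul_div_linear hKm1
          (tendsto_const_nhds (x := ρ * (μt / K))) hgdiv
        have hval : VFaux K ρ μt (K - 1) = ρ * (μt / K) / ((K : ℝ) - 1) := by
          have e2 : K - 2 + 1 = K - 1 := by omega
          have e3 : K - 2 + 2 = K := by omega
          have ec2 : ((K - 2 : ℕ) : ℝ) = (K : ℝ) - 2 := by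
            have := Nat.cast_sub (R := ℝ) (by omega : 2 ≤ K); push_cast at this; exact this
          have hstep := VFaux_succ K (μt := μt) hρ0 hK0 (K - 2) (by omega)
          rw [e2, e3, ec2, VFaux_top K ρ μt K le_rfl] at hstep
          rw [hstep]
          ring
        rw [hval]
        refine hnl.congr' ?_
        filter_upwards [eventually_gt_atTop (0 : ℝ)] with x hx
        have hγ' : gammaCD K μt x (K - 1) = ((K : ℝ) - 1) * x + μt / K := by
          rw [gammaCD, ecast]; ring
        rw [hnK1 x hx]
        exact aux_id ρ x (μt / K) ((K : ℝ) - 1) _ (hγpos x hx).ne' hγ'  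
    | succ i hi ih =>
      intro hi1
      obtain ⟨ihm, ihn⟩ := ih (by omega)
      have ej : K - (i + 1) + 1 = K - i := by omega
      have ejc : ((K - (i + 1) : ℕ) : ℝ) = (K : ℝ) - ((i : ℝ) + 1) := by
        have := Nat.cast_sub (R := ℝ) (by omega : i + 1 ≤ K); push_cast at this
        linarith
      have jr_pos : (0 : ℝ) < (K : ℝ) - ((i : ℝ) + 1) := by
        have : ((i : ℝ) + 1) + 1 ≤ (K : ℝ) := by exact_mod_cast (by omega : i + 1 + 1 ≤ K)
        linarith
      have hD : ∀ x : ℝ,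
          alphaCD K ρ μt x (K - (i + 1)) - n x (K - i) * (ρ * x)
            = ((K : ℝ) - ((i : ℝ) + 1)) * x
              + (((i : ℝ) + 1) * μt / K + ρ * x * (1 - n x (K - i))) := by
        intro x; rw [alphaCD, ejc]; ring
      have hDdiv : Tendsto
          (fun x => (alphaCD K ρ μt x (K - (i + 1)) - n x (K - i) * (ρ * x)) / x)
          atTop (nhds ((K : ℝ) - ((i : ℝ) + 1))) :=
        tendsto_div_linear ihn hD
      have jr_ne : (K : ℝ) - ((i : ℝ) + 1) ≠ 0 := jr_pos.ne'
      -- index bookkeeping for the value identities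
      have e2 : K - i - 2 + 1 = K - (i + 1) := by omega
      have e3 : K - i - 2 + 2 = K - i := by omega
      have ec2 : ((K - i - 2 : ℕ) : ℝ) = (K : ℝ) - ((i : ℝ) + 2) := by
        have h' : K - i - 2 = K - (i + 2) := by omega
        rw [h']
        have := Nat.cast_sub (R := ℝ) (by omega : i + 2 ≤ K); push_cast at this
        linarith
      constructor
      · have hf : Tendsto (fun x => (1 + m x (K - i) * (ρ * x)) * ρ) atTop
            (nhds ((1 + WFaux K ρ (K - i)) * ρ)) :=
          (tendsto_const_nhds.add ihm).mul tendsto_const_nhds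
        have hml := tendsto_mul_div_linear jr_ne hf hDdiv
        have hval : WFaux K ρ (K - (i + 1))
            = (1 + WFaux K ρ (K - i)) * ρ / ((K : ℝ) - ((i : ℝ) + 1)) := by
          have hstep := WFaux_succ K hρ0 (K - i - 2) (by omega)
          rw [e2, e3, ec2] at hstep
          rw [hstep]
          have : (K : ℝ) - ((i : ℝ) + 2) + 1 = (K : ℝ) - ((i : ℝ) + 1) := by ring
          rw [this]
          ring
        rw [hval]
        refine hml.congr' ?_
        filter_upwards [eventually_gt_atTop (0 : ℝ)] with x hx
        have h := (hrec x hx (i + 1) (by omega) (by omega)).1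
        rw [ej] at h
        rw [h]
        ring
      · have hf : Tendsto
            (fun x => ρ * (((i : ℝ) + 1) * μt / K + ρ * x * (1 - n x (K - i)))) atTop
            (nhds (ρ * (((i : ℝ) + 1) * μt / K + VFaux K ρ μt (K - i)))) :=
          (tendsto_const_nhds.add ihn).const_mul ρ
        have hnl := tendsto_mul_div_linear jr_ne hf hDdiv
        have hval : VFaux K ρ μt (K - (i + 1))
            = ρ * (((i : ℝ) + 1) * μt / K + VFaux K ρ μt (K - i))
              / ((K : ℝ) - ((i : ℝ) + 1)) := by
          have hstep := VFaux_succ K (μt := μt) hρ0 hK0 (K - i - 2) (by omega)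
          rw [e2, e3, ec2] at hstep
          rw [hstep]
          have : (K : ℝ) - ((i : ℝ) + 2) + 1 = (K : ℝ) - ((i : ℝ) + 1) := by ring
          rw [this]
          ring
        rw [hval]
        refine hnl.congr' ?_
        filter_upwards [eventually_gt_atTop (0 : ℝ),
          hDdiv.eventually_ne jr_ne] with x hx hDx
        have hD0 : alphaCD K ρ μt x (K - (i + 1)) - n x (K - i) * (ρ * x) ≠ 0 := by
          intro h0
          apply hDx
          rw [h0, zero_div]
        have h := (hrec x hx (i + 1) (by omega) (by omega)).2
        rw [ej] at h
        have hic : ((K : ℝ) - ((i + 1 : ℕ) : ℝ)) = (K : ℝ) - ((i : ℝ) + 1) := by push_cast; ring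
        rw [h, hic]
        exact aux_id ρ x _ _ _ hD0 (hD x)
  -- assemble
  obtain ⟨hm1, hn1⟩ := key (K - 1) (by omega) le_rfl
  have e : K - (K - 1) = 1 := by omega
  rw [e] at hm1 hn1
  have hVnonneg : 0 ≤ VFaux K ρ μt 1 := by
    rw [VFaux]
    apply mul_nonneg (by positivity)
    apply Finset.sum_nonneg
    intro l hl
    have hlK : (l : ℝ) ≤ (K : ℝ) := by
      exact_mod_cast le_of_lt (Finset.mem_Ico.1 hl).2
    have h1 : (0 : ℝ) ≤ ρ ^ l / (Nat.factorial l : ℝ) := by positivity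
    have h2 : (0 : ℝ) ≤ ((K : ℝ) - l) * μt / K := by
      apply div_nonneg _ (le_of_lt hKR)
      apply mul_nonneg (by linarith) (le_of_lt hmut)
    exact mul_nonneg h1 h2
  have hden_pos : 0 < μt + VFaux K ρ μt 1 := by linarith
  have hlim : Tendsto (fun x => (1 + m x 1 * (ρ * x)) / (μt + ρ * x * (1 - n x 1))) atTop
      (nhds ((1 + WFaux K ρ 1) / (μt + VFaux K ρ μt 1))) :=
    (tendsto_const_nhds.add hm1).div (tendsto_const_nhds.add hn1) hden_pos.ne'
  have hnum : 1 + WFaux K ρ 1 = ∑ j ∈ Finset.range (K + 1), ρ ^ j / (Nat.factorial j : ℝ) := by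
    rw [WFaux]
    simp only [Nat.sub_self, pow_zero, Nat.factorial_zero, Nat.cast_one, div_one, one_mul]
    rw [Finset.range_eq_Ico, Finset.sum_eq_sum_Ico_succ_bot (by omega : 0 < K + 1)]
    simp
  have hden : μt + VFaux K ρ μt 1
      = (∑ j ∈ Finset.range K, (ρ ^ j / (Nat.factorial j : ℝ)) * (((K : ℝ) - j) / K)) * μt := by
    rw [VFaux]
    simp only [Nat.sub_self, pow_zero, Nat.factorial_zero, Nat.cast_one, div_one, one_mul]
    rw [Finset.sum_mul, Finset.range_eq_Ico,
      Finset.sum_eq_sum_Ico_succ_bot (by omega : 0 < K)]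
    have h0 : ρ ^ 0 / ((Nat.factorial 0 : ℕ) : ℝ) * (((K : ℝ) - (0 : ℕ)) / K) * μt = μt := by
      simp [Nat.factorial_zero]
      field_simp
    rw [h0]
    congr 1
    apply Finset.sum_congr rfl
    intro jj _
    ring
  rw [hnum, hden] at hlim
  refine hlim.congr fun x => ?_
  ring
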